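/- (Norm rate under p-convexity.) Under the hypotheses of the p-convexity rate theorem — R proper convex with ξ† = (F*F)^ν ω† ∈ ∂R(u†), 0 < ν < 1/2, p ≥ 1, Fu† = v†, C₀‖w − u†‖^p ≤ D_{ξ†}(w, u†) for ‖w − u†‖ ≤ M, and parameter choice α(δ) = c·δ^((2p−2−2pν+4ν)/(p−1+2ν)) — there exists C > 0 such that for all δ > 0, every v^δ with ‖v† − v^δ‖ ≤ δ, and every minimiser u_α^δ of the Tikhonov functional with ‖u_α^δ − u†‖ ≤ M, one has the norm estimate ‖u_α^δ − u†‖ ≤ C·δ^(2ν/(p−1+2ν)). -/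

import Mathlib

open ContinuousLinearMap
open scoped RealInnerProductSpace

noncomputable section

/-- `P` is the fractional power `T ^ ν` of the (positive self-adjoint) operator `T`, defined
via the continuous functional calculus: there is a continuous star-algebra homomorphism from
`C(σ(T), ℝ)` to the bounded operators mapping the identity function to `T` (such a
homomorphism is unique by Stone–Weierstrass), and `P` is the image of (a continuous extension
of) the function `x ↦ x ^ ν`. -/
def IsFractionalPower {W : Type*} [NormedAddCommGroup W] [InnerProductSpace ℝ W]
    [CompleteSpace W] (T : W →L[ℝ] W) (ν : ℝ) (P : W →L[ℝ] W) : Prop :=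
  ∃ Φ : C(spectrum ℝ T, ℝ) →⋆ₐ[ℝ] (W →L[ℝ] W),
    Continuous Φ ∧
    Φ ((ContinuousMap.id ℝ).restrict (spectrum ℝ T)) = T ∧
    ∃ f : C(ℝ, ℝ), (∀ x ∈ spectrum ℝ T, f x = x ^ ν) ∧
      Φ (f.restrict (spectrum ℝ T)) = P

/-- `ξ` is a subgradient of the extended-real-valued functional `R` at `u`:
`R u < +∞` and `R w ≥ R u + ⟪ξ, w - u⟫` for all `w`. -/
def IsSubgradient {U : Type*} [NormedAddCommGroup U] [InnerProductSpace ℝ U]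
    (R : U → EReal) (ξ u : U) : Prop :=
  R u < ⊤ ∧ ∀ w, R u + ((⟪ξ, w - u⟫ : ℝ) : EReal) ≤ R w

/-- Convexity for extended-real-valued functionals. -/
def ErealConvexOn {U : Type*} [NormedAddCommGroup U] [InnerProductSpace ℝ U]
    (R : U → EReal) : Prop :=
  ∀ u w : U, ∀ t : ℝ, 0 ≤ t → t ≤ 1 →
    R (t • u + (1 - t) • w) ≤ ((t : ℝ) : EReal) * R u + (((1 - t : ℝ)) : EReal) * R w

/-- The Bregman distance `D_ξ(w, u) = R w - R u - ⟪ξ, w - u⟫`. -/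
def Breg {U : Type*} [NormedAddCommGroup U] [InnerProductSpace ℝ U]
    (R : U → EReal) (ξ w u : U) : EReal :=
  R w - R u - ((⟪ξ, w - u⟫ : ℝ) : EReal)

/-- The Tikhonov functional `T_α(u) = (1/2)‖F u - v‖² + α R(u)`. -/
def Tik {U V : Type*} [NormedAddCommGroup U] [InnerProductSpace ℝ U]
    [NormedAddCommGroup V] [InnerProductSpace ℝ V]
    (F : U →L[ℝ] V) (R : U → EReal) (α : ℝ) (v : V) (u : U) : EReal :=
  (((1 : ℝ) / 2 * ‖F u - v‖ ^ 2 : ℝ) : EReal) + ((α : ℝ) : EReal) * R u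


open scoped NNReal

section ScalarLemmas


lemma young_abs {s : ℝ} (hs0 : 0 < s) (hs1 : s < 1) {K x ε : ℝ}
    (hK : 0 ≤ K) (hx : 0 ≤ x) (hε : 0 < ε) :
    K * x ^ s ≤ ε * x + (K / ε ^ s) ^ (1 / (1 - s)) := by
  set Y : ℝ := (K / ε ^ s) ^ (1 / (1 - s)) with hYdef
  have hKe : 0 ≤ K / ε ^ s := div_nonneg hK (Real.rpow_nonneg hε.le s)
  have hY : 0 ≤ Y := Real.rpow_nonneg hKe _
  have h1s : (0:ℝ) < 1 - s := by linarith
  have hYpow : Y ^ (1 - s) = K / ε ^ s := by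
    rw [hYdef, ← Real.rpow_mul hKe, one_div, inv_mul_cancel₀ h1s.ne', Real.rpow_one]
  have key : K * x ^ s = (ε * x) ^ s * Y ^ (1 - s) := by
    rw [hYpow, Real.mul_rpow hε.le hx]
    have hεs : ε ^ s ≠ 0 := (Real.rpow_pos_of_pos hε s).ne'
    field_simp
  have hgm := Real.geom_mean_le_arith_mean2_weighted hs0.le h1s.le
    (mul_nonneg hε.le hx) hY (by ring)
  have h1 : s * (ε * x) ≤ ε * x := by nlinarith [mul_nonneg hε.le hx]
  have h2 : (1 - s) * Y ≤ Y := by nlinarith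
  calc K * x ^ s = (ε * x) ^ s * Y ^ (1 - s) := key
    _ ≤ s * (ε * x) + (1 - s) * Y := hgm
    _ ≤ ε * x + Y := by linarith

lemma rpow_add_one_le {τ θ : ℝ} (hτ : 0 ≤ τ) (hθ0 : 0 ≤ θ) (hθ1 : θ ≤ 1) :
    (τ + 1) ^ θ ≤ τ ^ θ + 1 := by
  have h := NNReal.rpow_add_le_add_rpow (τ.toNNReal) 1 hθ0 hθ1
  have h' : ((τ.toNNReal + 1 : ℝ≥0) ^ θ : ℝ) ≤ ((τ.toNNReal ^ θ + 1 ^ θ : ℝ≥0) : ℝ) :=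
    NNReal.coe_le_coe.mpr h
  simpa [NNReal.coe_rpow, Real.coe_toNNReal τ hτ, NNReal.rpow_eq_pow,
    Real.one_rpow, NNReal.one_rpow] using h'

lemma rate_scalar_bound (p θ C₀ A c : ℝ) (hp : 1 ≤ p) (hθ0 : 0 < θ) (hθ1 : θ < 1)
    (hC₀ : 0 < C₀) (hA : 0 ≤ A) (hc : 0 < c) :
    ∃ C : ℝ, 0 < C ∧ ∀ τ η : ℝ, 0 ≤ τ → 0 ≤ η →
      τ ^ 2 / 2 + c * C₀ * η ^ p ≤ 1 / 2 + c * A * η ^ (1 - θ) * (τ + 1) ^ θ → η ≤ C := by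
  have hp0 : (0:ℝ) < p := lt_of_lt_of_le one_pos hp
  set s₁ : ℝ := (1 - θ) * (1 / (1 - θ / 2)) with hs₁def
  have hθ2 : (0:ℝ) < 1 - θ / 2 := by linarith
  have hs₁pos : 0 < s₁ := by
    exact mul_pos (by linarith) (one_div_pos.mpr hθ2)
  have hs₁lt : s₁ < 1 := by
    rw [hs₁def]
    rw [mul_one_div, div_lt_one hθ2]
    linarith
  set B₁ : ℝ := c * A / (1 / 2 : ℝ) ^ (θ / 2) with hB₁def
  have hB₁ : 0 ≤ B₁ := div_nonneg (by positivity) (Real.rpow_nonneg (by norm_num) _)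
  set B₂ : ℝ := B₁ ^ (1 / (1 - θ / 2)) with hB₂def
  have hB₂ : 0 ≤ B₂ := Real.rpow_nonneg hB₁ _
  set ε : ℝ := c * C₀ / 4 with hεdef
  have hε : 0 < ε := by positivity
  set G₂ : ℝ := (B₂ / ε ^ (s₁ / p)) ^ (1 / (1 - s₁ / p)) with hG₂def
  set G₃ : ℝ := (c * A / ε ^ ((1 - θ) / p)) ^ (1 / (1 - (1 - θ) / p)) with hG₃def
  have hG₂ : 0 ≤ G₂ := Real.rpow_nonneg (div_nonneg hB₂ (Real.rpow_nonneg hε.le _)) _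
  have hG₃ : 0 ≤ G₃ := Real.rpow_nonneg (div_nonneg (by positivity) (Real.rpow_nonneg hε.le _)) _
  set K : ℝ := (1 / 2 + G₂ + G₃) / (c * C₀ / 2) with hKdef
  have hK : 0 < K := by
    apply div_pos (by linarith) (by positivity)
  refine ⟨K ^ (1 / p), Real.rpow_pos_of_pos hK _, ?_⟩
  intro τ η hτ hη H
  -- step 0: subadditivity
  have hη1θ : 0 ≤ η ^ (1 - θ) := Real.rpow_nonneg hη _
  have hsub : c * A * η ^ (1 - θ) * (τ + 1) ^ θ ≤
      c * A * η ^ (1 - θ) * τ ^ θ + c * A * η ^ (1 - θ) := by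
    have := rpow_add_one_le hτ hθ0.le hθ1.le
    nlinarith [mul_nonneg (mul_nonneg hc.le hA) hη1θ]
  -- step 1: Young on the τ term
  have hτθ : τ ^ θ = (τ ^ 2) ^ (θ / 2) := by
    rw [← Real.rpow_natCast τ 2, ← Real.rpow_mul hτ]
    congr 1; ring
  have hstep1 : c * A * η ^ (1 - θ) * τ ^ θ ≤
      (1 / 2) * τ ^ 2 + B₂ * η ^ s₁ := by
    have hy := young_abs (s := θ / 2) (by positivity) (by linarith)
      (K := c * A * η ^ (1 - θ)) (x := τ ^ 2) (ε := 1 / 2)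
      (by positivity) (by positivity) (by norm_num)
    rw [← hτθ] at hy
    refine hy.trans ?_
    have heq : (c * A * η ^ (1 - θ) / (1 / 2 : ℝ) ^ (θ / 2)) ^ (1 / (1 - θ / 2))
        = B₂ * η ^ s₁ := by
      have h1 : c * A * η ^ (1 - θ) / (1 / 2 : ℝ) ^ (θ / 2) = B₁ * η ^ (1 - θ) := by
        rw [hB₁def]; ring
      rw [h1, Real.mul_rpow hB₁ hη1θ, ← Real.rpow_mul hη]
    rw [heq]
  -- step 2: Young absorbing B₂ * η ^ s₁
  have hηp0 : 0 ≤ η ^ p := Real.rpow_nonneg hη _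
  have hstep2 : B₂ * η ^ s₁ ≤ ε * η ^ p + G₂ := by
    have hηs₁ : η ^ s₁ = (η ^ p) ^ (s₁ / p) := by
      rw [← Real.rpow_mul hη]; congr 1; field_simp
    have hy := young_abs (s := s₁ / p) (div_pos hs₁pos hp0)
      (by rw [div_lt_one hp0]; linarith) hB₂ hηp0 hε
    rw [← hηs₁] at hy
    exact hy
  -- step 3: Young absorbing c * A * η ^ (1 - θ)
  have hstep3 : c * A * η ^ (1 - θ) ≤ ε * η ^ p + G₃ := by
    have hηs₂ : η ^ (1 - θ) = (η ^ p) ^ ((1 - θ) / p) := by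
      rw [← Real.rpow_mul hη]; congr 1; field_simp
    have hy := young_abs (s := (1 - θ) / p) (div_pos (by linarith) hp0)
      (by rw [div_lt_one hp0]; linarith) (K := c * A) (by positivity) hηp0 hε
    rw [← hηs₂] at hy
    exact hy
  -- combine
  have hmain : c * C₀ / 2 * η ^ p ≤ 1 / 2 + G₂ + G₃ := by
    rw [hεdef] at hstep2 hstep3
    linarith [H, hsub, hstep1, hstep2, hstep3]
  have hle : η ^ p ≤ K := by
    rw [hKdef, le_div_iff₀ (by positivity)]
    calc η ^ p * (c * C₀ / 2) = c * C₀ / 2 * η ^ p := by ring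
      _ ≤ 1 / 2 + G₂ + G₃ := hmain
  calc η = (η ^ p) ^ (1 / p) := by
        rw [← Real.rpow_mul hη, mul_one_div, div_self hp0.ne', Real.rpow_one]
    _ ≤ K ^ (1 / p) := Real.rpow_le_rpow hηp0 hle (by positivity)

end ScalarLemmas

section OperatorLemmas

variable {U V : Type*} [NormedAddCommGroup U] [InnerProductSpace ℝ U] [CompleteSpace U]
  [NormedAddCommGroup V] [InnerProductSpace ℝ V] [CompleteSpace V]

lemma spectrum_TT_nonneg (F : U →L[ℝ] V) {μ : ℝ}
    (hμ : μ ∈ spectrum ℝ ((adjoint F).comp F)) : 0 ≤ μ := by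
  by_contra hcon
  push_neg at hcon
  set T : U →L[ℝ] U := (adjoint F).comp F with hT
  set S : U →L[ℝ] U := T - (algebraMap ℝ (U →L[ℝ] U)) μ with hS
  have hBap : ∀ u w : U, ((innerSL ℝ).comp S) u w = ⟪F u, F w⟫ - μ * ⟪u, w⟫ := by
    intro u w
    simp only [ContinuousLinearMap.comp_apply, innerSL_apply_apply, hS,
      ContinuousLinearMap.sub_apply, Algebra.algebraMap_eq_smul_one,
      ContinuousLinearMap.smul_apply, ContinuousLinearMap.one_apply,
      inner_sub_left, real_inner_smul_left, hT]
    rw [adjoint_inner_left]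
  have hB : IsCoercive ((innerSL ℝ).comp S) := by
    refine ⟨-μ, by linarith, fun u => ?_⟩
    rw [hBap u u, real_inner_self_eq_norm_mul_norm, real_inner_self_eq_norm_mul_norm]
    nlinarith [mul_self_nonneg ‖F u‖, mul_self_nonneg ‖u‖]
  set e := hB.continuousLinearEquivOfBilin with he
  have hSe : (e : U →L[ℝ] U) = S := by
    ext v
    apply ext_inner_right ℝ
    intro w
    rw [ContinuousLinearEquiv.coe_coe, hB.continuousLinearEquivOfBilin_apply v w, hBap v w,
      ← hBap v w]
    simp [ContinuousLinearMap.comp_apply, innerSL_apply_apply]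
  have hunit : IsUnit S := by
    rw [← hSe]
    exact ⟨e.toUnit, rfl⟩
  have : IsUnit ((algebraMap ℝ (U →L[ℝ] U)) μ - T) := by
    have h2 : (algebraMap ℝ (U →L[ℝ] U)) μ - T = -S := by rw [hS]; abel
    rw [h2]
    exact hunit.neg
  exact (spectrum.notMem_iff.mpr this) hμ

lemma phi_inner_nonneg {T : U →L[ℝ] U} (Φ : C(spectrum ℝ T, ℝ) →⋆ₐ[ℝ] (U →L[ℝ] U))
    (g : C(spectrum ℝ T, ℝ)) (hg : ∀ x, 0 ≤ g x) (e : U) : 0 ≤ ⟪(Φ g) e, e⟫ := by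
  set h : C(spectrum ℝ T, ℝ) :=
    ⟨fun x => Real.sqrt (g x), Real.continuous_sqrt.comp g.continuous⟩ with hh
  have hhh : h * h = g := by
    ext x
    exact Real.mul_self_sqrt (hg x)
  have hstar : star (Φ h) = Φ h := by
    rw [← map_star, star_trivial]
  have hadj : adjoint (Φ h) = Φ h := by rw [← star_eq_adjoint]; exact hstar
  have hg' : Φ g = Φ h * Φ h := by rw [← hhh, map_mul]
  rw [hg', ContinuousLinearMap.mul_apply]
  calc (0:ℝ) ≤ ⟪(Φ h) e, (Φ h) e⟫ := real_inner_self_nonneg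
    _ = ⟪(Φ h) ((Φ h) e), e⟫ := by
        have h2 := adjoint_inner_left (Φ h) e ((Φ h) e)
        rw [hadj] at h2
        exact h2.symm

lemma phi_inner_mono {T : U →L[ℝ] U} (Φ : C(spectrum ℝ T, ℝ) →⋆ₐ[ℝ] (U →L[ℝ] U))
    (g₁ g₂ : C(spectrum ℝ T, ℝ)) (hle : ∀ x, g₁ x ≤ g₂ x) (e : U) :
    ⟪(Φ g₁) e, e⟫ ≤ ⟪(Φ g₂) e, e⟫ := by
  have key := phi_inner_nonneg Φ (g₂ - g₁) (fun x => by
    have := hle x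
    simp only [ContinuousMap.sub_apply]
    linarith) e
  rw [map_sub, ContinuousLinearMap.sub_apply, inner_sub_left] at key
  linarith

lemma pow_two_nu_le {x lam ν : ℝ} (hx : 0 ≤ x) (hlam : 0 < lam) (hν0 : 0 < ν) (hν1 : ν < 1/2) :
    x ^ (2*ν) ≤ 2*ν*lam^(2*ν-1)*x + (1-2*ν)*lam^(2*ν) := by
  have hgm := Real.geom_mean_le_arith_mean2_weighted (by linarith : (0:ℝ) ≤ 2*ν)
    (by linarith : (0:ℝ) ≤ 1-2*ν) hx hlam.le (by ring)
  have hl1 : lam ^ (1-2*ν) * lam^(2*ν-1) = 1 := by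
    rw [← Real.rpow_add hlam]
    norm_num
  have hl2 : lam * lam^(2*ν-1) = lam^(2*ν) := by
    nth_rewrite 1 [← Real.rpow_one lam]
    rw [← Real.rpow_add hlam]
    congr 1
    ring
  calc x^(2*ν) = x^(2*ν) * lam^(1-2*ν) * lam^(2*ν-1) := by
        rw [mul_assoc, hl1, mul_one]
    _ ≤ (2*ν*x + (1-2*ν)*lam) * lam^(2*ν-1) :=
        mul_le_mul_of_nonneg_right hgm (Real.rpow_nonneg hlam.le _)
    _ = 2*ν*lam^(2*ν-1)*x + (1-2*ν)*(lam * lam^(2*ν-1)) := by ring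
    _ = 2*ν*lam^(2*ν-1)*x + (1-2*ν)*lam^(2*ν) := by rw [hl2]

lemma fracpow_interp (F : U →L[ℝ] V) {ν : ℝ} (hν0 : 0 < ν) (hν1 : ν < 1/2)
    {P : U →L[ℝ] U} (hP : IsFractionalPower ((adjoint F).comp F) ν P)
    {e : U} (he : e ≠ 0) {B' : ℝ} (hB' : 0 < B') (hFB : ‖F e‖^2 ≤ B') :
    ‖P e‖^2 ≤ B' ^ (2*ν) * (‖e‖^2) ^ (1-2*ν) := by
  obtain ⟨Φ, hΦc, hΦid, f, hf, hfP⟩ := hP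
  set N : ℝ := ‖e‖^2 with hNdef
  have hN : (0:ℝ) < N := by
    have : 0 < ‖e‖ := norm_pos_iff.mpr he
    positivity
  set lam : ℝ := B' / N with hlamdef
  have hlam0 : 0 < lam := div_pos hB' hN
  set g₁ : C(spectrum ℝ ((adjoint F).comp F), ℝ) := (f.restrict (spectrum ℝ ((adjoint F).comp F))) * (f.restrict (spectrum ℝ ((adjoint F).comp F)))
    with hg₁def
  set g₂ : C(spectrum ℝ ((adjoint F).comp F), ℝ) :=
    ⟨fun x => 2*ν*lam^(2*ν-1)*(x:ℝ) + (1-2*ν)*lam^(2*ν), by fun_prop⟩ with hg₂def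
  have hle : ∀ x : spectrum ℝ ((adjoint F).comp F), g₁ x ≤ g₂ x := by
    intro x
    have hx0 : (0:ℝ) ≤ x := spectrum_TT_nonneg F x.2
    have hfx : f x = (x:ℝ)^ν := hf x x.2
    have hval : g₁ x = (x:ℝ)^(2*ν) := by
      rw [hg₁def, ContinuousMap.mul_apply, ContinuousMap.restrict_apply, hfx,
        ← Real.rpow_add' hx0 (by linarith)]
      congr 1
      ring
    rw [hval]
    exact pow_two_nu_le hx0 hlam0 hν0 hν1
  have hkey := phi_inner_mono Φ g₁ g₂ hle e
  have hstarP : adjoint P = P := by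
    rw [← star_eq_adjoint, ← hfP, ← map_star, star_trivial]
  have hg₁e : ⟪(Φ g₁) e, e⟫ = ‖P e‖^2 := by
    have hPP : Φ g₁ = P * P := by rw [hg₁def, map_mul, hfP]
    rw [hPP, ContinuousLinearMap.mul_apply]
    have h2 := adjoint_inner_left P e (P e)
    rw [hstarP] at h2
    rw [h2, real_inner_self_eq_norm_sq]
  have hg₂e : ⟪(Φ g₂) e, e⟫ = 2*ν*lam^(2*ν-1)*‖F e‖^2 + (1-2*ν)*lam^(2*ν)*N := by
    have hdecomp : g₂ = (2*ν*lam^(2*ν-1)) • ((ContinuousMap.id ℝ).restrict (spectrum ℝ ((adjoint F).comp F))) +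
        ((1-2*ν)*lam^(2*ν)) • (1 : C(spectrum ℝ ((adjoint F).comp F), ℝ)) := by
      ext x
      simp [hg₂def, ContinuousMap.restrict_apply]
    rw [hdecomp, map_add, map_smul, map_smul, map_one, hΦid]
    rw [ContinuousLinearMap.add_apply, ContinuousLinearMap.smul_apply,
      ContinuousLinearMap.smul_apply, ContinuousLinearMap.one_apply]
    rw [inner_add_left, real_inner_smul_left, real_inner_smul_left]
    have hTe : ⟪((adjoint F).comp F) e, e⟫ = ‖F e‖^2 := by
      rw [ContinuousLinearMap.comp_apply, adjoint_inner_left, real_inner_self_eq_norm_sq]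
    rw [hTe, real_inner_self_eq_norm_sq, ← hNdef]
  rw [hg₁e, hg₂e] at hkey
  have hmono : 2*ν*lam^(2*ν-1)*‖F e‖^2 ≤ 2*ν*lam^(2*ν-1)*B' :=
    mul_le_mul_of_nonneg_left hFB (by positivity)
  have hN1 : N ^ (1-2*ν) = 1 / N^(2*ν-1) := by
    rw [one_div, ← Real.rpow_neg hN.le]
    congr 1
    ring
  have hN2 : N ^ (1-2*ν) = N / N^(2*ν) := by
    have := Real.rpow_sub hN 1 (2*ν)
    rw [Real.rpow_one] at this
    rw [← this]
  have hB1 : B'^(2*ν-1) * B' = B'^(2*ν) := by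
    rw [← Real.rpow_add_one hB'.ne']
    congr 1
    ring
  have e1 : lam^(2*ν-1) = B'^(2*ν-1) / N^(2*ν-1) := by
    rw [hlamdef, Real.div_rpow hB'.le hN.le]
  have e2 : lam^(2*ν) = B'^(2*ν) / N^(2*ν) := by
    rw [hlamdef, Real.div_rpow hB'.le hN.le]
  have hfinal : 2*ν*lam^(2*ν-1)*B' + (1-2*ν)*lam^(2*ν)*N = B'^(2*ν) * N^(1-2*ν) := by
    calc 2*ν*lam^(2*ν-1)*B' + (1-2*ν)*lam^(2*ν)*N
        = 2*ν*((B'^(2*ν-1)*B')*(1/N^(2*ν-1))) + (1-2*ν)*(B'^(2*ν)*(N/N^(2*ν))) := by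
          rw [e1, e2]; ring
      _ = 2*ν*(B'^(2*ν)*N^(1-2*ν)) + (1-2*ν)*(B'^(2*ν)*N^(1-2*ν)) := by
          rw [hB1, ← hN1, ← hN2]
      _ = B'^(2*ν) * N^(1-2*ν) := by ring
  linarith


lemma fracpow_adjoint {T P : U →L[ℝ] U} {ν : ℝ} (hP : IsFractionalPower T ν P) :
    adjoint P = P := by
  obtain ⟨Φ, -, -, f, -, hfP⟩ := hP
  rw [← star_eq_adjoint, ← hfP, ← map_star, star_trivial]

end OperatorLemmas

/-- norm rate under p-convexity,
with `α(δ) = c δ^((2p-2-2pν+4ν)/(p-1+2ν))`. -/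
theorem pconvex_norm_rate
    {U V : Type*} [NormedAddCommGroup U] [InnerProductSpace ℝ U] [CompleteSpace U]
    [NormedAddCommGroup V] [InnerProductSpace ℝ V] [CompleteSpace V]
    (F : U →L[ℝ] V) (R : U → EReal) (hRbot : ∀ u, R u ≠ ⊥) (hconv : ErealConvexOn R)
    (p ν : ℝ) (hp : 1 ≤ p) (hν0 : 0 < ν) (hν1 : ν < 1 / 2)
    (P : U →L[ℝ] U) (hP : IsFractionalPower ((adjoint F).comp F) ν P)
    (udag : U) (vdag : V) (hud : F udag = vdag)
    (ωdag ξdag : U) (hξ : ξdag = P ωdag) (hsub : IsSubgradient R ξdag udag)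
    (M : ℝ) (hM : 0 < M) (C₀ : ℝ) (hC₀ : 0 < C₀)
    (hpconv : ∀ w : U, ‖w - udag‖ ≤ M →
      ((C₀ * ‖w - udag‖ ^ p : ℝ) : EReal) ≤ Breg R ξdag w udag)
    (c : ℝ) (hc : 0 < c) :
    ∃ C : ℝ, 0 < C ∧
      ∀ δ : ℝ, 0 < δ → ∀ vδ : V, ‖vdag - vδ‖ ≤ δ →
        ∀ uαδ : U,
          (∀ u, Tik F R (c * δ ^ ((2 * p - 2 - 2 * p * ν + 4 * ν) / (p - 1 + 2 * ν))) vδ uαδ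
              ≤ Tik F R (c * δ ^ ((2 * p - 2 - 2 * p * ν + 4 * ν) / (p - 1 + 2 * ν))) vδ u) →
          ‖uαδ - udag‖ ≤ M →
          ‖uαδ - udag‖ ≤ C * δ ^ (2 * ν / (p - 1 + 2 * ν)) := by
  classical
  have hθ0 : (0:ℝ) < 2 * ν := by linarith
  have hθ1 : 2 * ν < 1 := by linarith
  have hβ : (0:ℝ) < p - 1 + 2 * ν := by linarith
  obtain ⟨C, hCpos, hC⟩ := rate_scalar_bound p (2 * ν) C₀ ‖ωdag‖ c hp hθ0 hθ1 hC₀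
    (norm_nonneg _) hc
  refine ⟨C, hCpos, ?_⟩
  intro δ hδ vδ hvδ u hmin hMle
  set μ : ℝ := 2 * ν / (p - 1 + 2 * ν) with hμdef
  set q : ℝ := (2 * p - 2 - 2 * p * ν + 4 * ν) / (p - 1 + 2 * ν) with hqdef
  set α : ℝ := c * δ ^ q with hαdef
  have hα : 0 < α := mul_pos hc (Real.rpow_pos_of_pos hδ q)
  by_cases he0 : u - udag = 0
  · rw [show u - udag = (0:U) from he0, norm_zero]
    have : 0 < δ ^ μ := Real.rpow_pos_of_pos hδ μ
    positivity
  set t : ℝ := ‖F u - vδ‖ with htdef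
  set E : ℝ := ‖u - udag‖ with hEdef
  have hE0 : 0 < E := norm_pos_iff.mpr he0
  have ht0 : 0 ≤ t := norm_nonneg _
  -- extract the real Tikhonov inequality
  have hRud_ne_top : R udag ≠ ⊤ := hsub.1.ne
  set rd : ℝ := (R udag).toReal with hrddef
  have hrd : R udag = (rd : EReal) := (EReal.coe_toReal hRud_ne_top (hRbot _)).symm
  have hmin' := hmin udag
  simp only [Tik] at hmin'
  rw [hrd] at hmin'
  have hRu_ne_top : R u ≠ ⊤ := by
    intro htop
    rw [htop, EReal.coe_mul_top_of_pos hα, EReal.add_top_of_ne_bot (EReal.coe_ne_bot _),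
      ← EReal.coe_mul, ← EReal.coe_add] at hmin'
    exact (EReal.coe_ne_top _) (top_le_iff.mp hmin')
  set ru : ℝ := (R u).toReal with hrudef
  have hru : R u = (ru : EReal) := (EReal.coe_toReal hRu_ne_top (hRbot _)).symm
  rw [hru, ← EReal.coe_mul, ← EReal.coe_mul, ← EReal.coe_add, ← EReal.coe_add,
    EReal.coe_le_coe_iff] at hmin'
  -- extract the real Bregman inequality
  have hbreg := hpconv u hMle
  rw [Breg, hru, hrd, ← EReal.coe_sub, ← EReal.coe_sub, EReal.coe_le_coe_iff] at hbreg
  set ip : ℝ := ⟪ξdag, u - udag⟫ with hipdef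
  -- interpolation bound for the source term
  have hFe : ‖F (u - udag)‖ ≤ t + δ := by
    have hsplit : F (u - udag) = (F u - vδ) + (vδ - vdag) := by
      rw [map_sub, hud]; abel
    rw [hsplit]
    refine (norm_add_le _ _).trans ?_
    refine add_le_add le_rfl ?_
    rw [norm_sub_rev]
    exact hvδ
  have htδ : 0 < t + δ := by positivity
  have hinterp : ‖P (u - udag)‖ ≤ (t + δ) ^ (2 * ν) * E ^ (1 - 2 * ν) := by
    have hFe2 : ‖F (u - udag)‖ ^ 2 ≤ (t + δ) ^ 2 :=
      pow_le_pow_left₀ (norm_nonneg _) hFe 2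
    have h2 := fracpow_interp F hν0 hν1 hP he0 (B' := (t + δ) ^ 2) (by positivity) hFe2
    have hsq : ∀ x y : ℝ, 0 ≤ x → ((x ^ 2 : ℝ)) ^ (y : ℝ) = (x ^ y) ^ 2 := by
      intro x y hx
      rw [← Real.rpow_natCast x 2, ← Real.rpow_mul hx, ← Real.rpow_natCast (x ^ y) 2,
        ← Real.rpow_mul hx]
      norm_num
      ring_nf
    rw [hsq _ _ htδ.le, hsq _ _ (norm_nonneg _), ← mul_pow] at h2
    have := Real.sqrt_le_sqrt h2
    rw [Real.sqrt_sq (norm_nonneg _), Real.sqrt_sq (by positivity)] at this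
    exact this
  -- bound on the inner-product term
  have hip_bound : -ip ≤ ‖ωdag‖ * ‖P (u - udag)‖ := by
    have hadjP : adjoint P = P := fracpow_adjoint hP
    have hswap := adjoint_inner_left P (u - udag) ωdag
    rw [hadjP] at hswap
    have : ip = ⟪ωdag, P (u - udag)⟫ := by rw [hipdef, hξ, hswap]
    rw [this]
    exact (neg_le_abs _).trans (abs_real_inner_le_norm _ _)
  -- the master real inequality
  have hb : (1:ℝ) / 2 * ‖F udag - vδ‖ ^ 2 ≤ δ ^ 2 / 2 := by
    rw [hud]
    have h1 : ‖vdag - vδ‖ ^ 2 ≤ δ ^ 2 := pow_le_pow_left₀ (norm_nonneg _) hvδ 2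
    linarith
  have master : t ^ 2 / 2 + α * (C₀ * E ^ p) ≤
      δ ^ 2 / 2 + α * (‖ωdag‖ * ((t + δ) ^ (2 * ν) * E ^ (1 - 2 * ν))) := by
    have h1 : α * (C₀ * E ^ p) ≤ α * (ru - rd - ip) :=
      mul_le_mul_of_nonneg_left hbreg hα.le
    have h2 : α * (-ip) ≤ α * (‖ωdag‖ * ‖P (u - udag)‖) :=
      mul_le_mul_of_nonneg_left hip_bound hα.le
    have h3 : α * (‖ωdag‖ * ‖P (u - udag)‖) ≤
        α * (‖ωdag‖ * ((t + δ) ^ (2 * ν) * E ^ (1 - 2 * ν))) :=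
      mul_le_mul_of_nonneg_left (mul_le_mul_of_nonneg_left hinterp (norm_nonneg _)) hα.le
    nlinarith [hmin', h1, h2, h3, hb]
  -- rescale
  have hδμ : 0 < δ ^ μ := Real.rpow_pos_of_pos hδ μ
  set τ : ℝ := t / δ with hτdef
  set η : ℝ := E / δ ^ μ with hηdef
  have hτ0 : 0 ≤ τ := div_nonneg ht0 hδ.le
  have hη0 : 0 ≤ η := div_nonneg hE0.le hδμ.le
  have ht : t = δ * τ := by rw [hτdef]; field_simp
  have hE : E = δ ^ μ * η := by rw [hηdef]; field_simp
  have hqμp : q + μ * p = 2 := by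
    rw [hqdef, hμdef]
    field_simp
    ring
  have hq2 : δ ^ q * δ ^ (μ * p) = δ ^ 2 := by
    rw [← Real.rpow_add hδ, hqμp, ← Real.rpow_natCast δ 2]
    norm_num
  have hqθ : q + (2 * ν + μ * (1 - 2 * ν)) = 2 := by
    rw [hqdef, hμdef]
    field_simp
    ring
  have hq3 : δ ^ q * (δ ^ (2 * ν) * δ ^ (μ * (1 - 2 * ν))) = δ ^ 2 := by
    rw [← Real.rpow_add hδ, ← Real.rpow_add hδ, hqθ, ← Real.rpow_natCast δ 2]
    norm_num
  have key1 : t ^ 2 / 2 + α * (C₀ * E ^ p) = δ ^ 2 * (τ ^ 2 / 2 + c * C₀ * η ^ p) := by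
    rw [ht, hE, Real.mul_rpow hδμ.le hη0, ← Real.rpow_mul hδ.le, hαdef]
    calc (δ * τ) ^ 2 / 2 + c * δ ^ q * (C₀ * (δ ^ (μ * p) * η ^ p))
        = (δ ^ q * δ ^ (μ * p)) * (c * C₀ * η ^ p) + δ ^ 2 * (τ ^ 2 / 2) := by ring
      _ = δ ^ 2 * (τ ^ 2 / 2 + c * C₀ * η ^ p) := by rw [hq2]; ring
  have key2 : δ ^ 2 / 2 + α * (‖ωdag‖ * ((t + δ) ^ (2 * ν) * E ^ (1 - 2 * ν))) =
      δ ^ 2 * (1 / 2 + c * ‖ωdag‖ * η ^ (1 - 2 * ν) * (τ + 1) ^ (2 * ν)) := by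
    have htδ' : t + δ = δ * (τ + 1) := by rw [ht]; ring
    rw [htδ', hE, Real.mul_rpow hδ.le (by linarith : (0:ℝ) ≤ τ + 1),
      Real.mul_rpow hδμ.le hη0, ← Real.rpow_mul hδ.le, hαdef]
    calc δ ^ 2 / 2 + c * δ ^ q * (‖ωdag‖ * (δ ^ (2 * ν) * (τ + 1) ^ (2 * ν) *
          (δ ^ (μ * (1 - 2 * ν)) * η ^ (1 - 2 * ν))))
        = δ ^ 2 / 2 + (δ ^ q * (δ ^ (2 * ν) * δ ^ (μ * (1 - 2 * ν)))) *
          (c * ‖ωdag‖ * η ^ (1 - 2 * ν) * (τ + 1) ^ (2 * ν)) := by ring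
      _ = δ ^ 2 * (1 / 2 + c * ‖ωdag‖ * η ^ (1 - 2 * ν) * (τ + 1) ^ (2 * ν)) := by
          rw [hq3]; ring
  have hscaled : τ ^ 2 / 2 + c * C₀ * η ^ p ≤
      1 / 2 + c * ‖ωdag‖ * η ^ (1 - 2 * ν) * (τ + 1) ^ (2 * ν) := by
    have h := master
    rw [key1, key2] at h
    exact (mul_le_mul_iff_right₀ (by positivity)).mp h
  have hηC : η ≤ C := hC τ η hτ0 hη0 hscaled
  calc E = δ ^ μ * η := hE
    _ ≤ δ ^ μ * C := mul_le_mul_of_nonneg_left hηC hδμ.le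
    _ = C * δ ^ μ := by ring
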